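/- Let S be the set of points [y₀:y₁:y₂] of the complex projective plane ℙ²(ℂ) satisfying y₀³ + y₁³ + y₂³ = 0 and y₀y₁y₂ = 0 (these conditions are well defined since both polynomials are homogeneous). Then S has exactly 9 elements. Moreover, the group of projective transformations generated by g₁ : [y₀:y₁:y₂] ↦ [y₀:ζy₁:ζ²y₂] and g₂ : [y₀:y₁:y₂] ↦ [y₁:y₂:y₀] maps S to itself and acts transitively on S. -/

import Mathlib

open scoped LinearAlgebra.Projectivization
open Projectivization

/-- The primitive cube root of unity `ζ = e^{2πi/3}`. -/
noncomputable def zetaC : ℂ := Complex.exp (2 * Real.pi * Complex.I / 3)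

lemma zetaC_ne_zero : zetaC ≠ 0 := Complex.exp_ne_zero _

/-- The linear automorphism of `ℂ³` inducing `g₁ : [y₀:y₁:y₂] ↦ [y₀:ζy₁:ζ²y₂]`. -/
noncomputable def g1Lin : (Fin 3 → ℂ) ≃ₗ[ℂ] (Fin 3 → ℂ) :=
  LinearEquiv.piCongrRight fun i =>
    LinearEquiv.smulOfNeZero ℂ ℂ (![1, zetaC, zetaC ^ 2] i)
      (by fin_cases i
          · exact one_ne_zero
          · exact zetaC_ne_zero
          · exact pow_ne_zero 2 zetaC_ne_zero)

/-- The linear automorphism of `ℂ³` inducing `g₂ : [y₀:y₁:y₂] ↦ [y₁:y₂:y₀]`. -/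
noncomputable def g2Lin : (Fin 3 → ℂ) ≃ₗ[ℂ] (Fin 3 → ℂ) :=
  LinearEquiv.funCongrLeft ℂ ℂ (finRotate 3)

/-- The projective transformation of `ℙ²(ℂ)` induced by a linear automorphism of `ℂ³`. -/
noncomputable def projPerm (e : (Fin 3 → ℂ) ≃ₗ[ℂ] (Fin 3 → ℂ)) :
    Equiv.Perm (ℙ ℂ (Fin 3 → ℂ)) where
  toFun := Projectivization.map e.toLinearMap e.injective
  invFun := Projectivization.map e.symm.toLinearMap e.symm.injective
  left_inv p := by
    induction p using Projectivization.ind with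
    | h v hv =>
      rw [Projectivization.map_mk, Projectivization.map_mk]
      exact (Projectivization.mk_eq_mk_iff' ℂ _ _ _ hv).mpr ⟨1, by simp⟩
  right_inv p := by
    induction p using Projectivization.ind with
    | h v hv =>
      rw [Projectivization.map_mk, Projectivization.map_mk]
      exact (Projectivization.mk_eq_mk_iff' ℂ _ _ _ hv).mpr ⟨1, by simp⟩

/-- The set `S` of points `[y₀:y₁:y₂] ∈ ℙ²(ℂ)` satisfying `y₀³+y₁³+y₂³ = 0` and
`y₀y₁y₂ = 0` (both conditions are homogeneous, hence well defined). -/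
def Scubics : Set (ℙ ℂ (Fin 3 → ℂ)) :=
  {p | ∃ (y : Fin 3 → ℂ) (hy : y ≠ 0), Projectivization.mk ℂ y hy = p ∧
    y 0 ^ 3 + y 1 ^ 3 + y 2 ^ 3 = 0 ∧ y 0 * y 1 * y 2 = 0}


/-! ### Auxiliary lemmas -/

lemma zetaC_cube : zetaC ^ 3 = 1 := by
  rw [zetaC, ← Complex.exp_nat_mul]
  rw [show (3:ℕ) * (2 * Real.pi * Complex.I / 3) = 2 * Real.pi * Complex.I by push_cast; ring]
  exact Complex.exp_two_pi_mul_I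

lemma zetaC_ne_one : zetaC ≠ 1 := by
  rw [zetaC, Ne, Complex.exp_eq_one_iff]
  rintro ⟨n, hn⟩
  have hI := Complex.I_ne_zero
  have hpi : (Real.pi : ℂ) ≠ 0 := by exact_mod_cast Real.pi_ne_zero
  have h2 : ((3 * n : ℤ) : ℂ) * (2 * Real.pi * Complex.I)
      = ((1 : ℤ) : ℂ) * (2 * Real.pi * Complex.I) := by push_cast; linear_combination -3 * hn
  have h3 : ((3 * n : ℤ) : ℂ) = ((1 : ℤ) : ℂ) :=
    mul_right_cancel₀ (by simp [hpi, hI, Real.pi_ne_zero]) h2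
  have := Int.cast_injective (α := ℂ) h3
  omega

lemma zetaC_sum : 1 + zetaC + zetaC ^ 2 = 0 := by
  have h : (zetaC - 1) * (1 + zetaC + zetaC ^ 2) = 0 := by linear_combination zetaC_cube
  rcases mul_eq_zero.mp h with h | h
  · exact absurd (sub_eq_zero.mp h) zetaC_ne_one
  · exact h

lemma zetaC_sq_ne_one : zetaC ^ 2 ≠ 1 := by
  intro h
  apply zetaC_ne_one
  calc zetaC = zetaC * zetaC ^ 2 := by rw [h, mul_one]
  _ = zetaC ^ 3 := by ring
  _ = 1 := zetaC_cube

lemma zetaC_pow_inj : ∀ k k' : Fin 3, zetaC ^ (k : ℕ) = zetaC ^ (k' : ℕ) → k = k' := by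
  have d01 : (1:ℂ) ≠ zetaC := fun h => zetaC_ne_one h.symm
  have d02 : (1:ℂ) ≠ zetaC ^ 2 := fun h => zetaC_sq_ne_one h.symm
  have d12 : zetaC ≠ zetaC ^ 2 := fun h =>
    zetaC_ne_one (mul_left_cancel₀ zetaC_ne_zero (by linear_combination h)).symm
  intro k k' h
  fin_cases k <;> fin_cases k' <;>
    simp only [Fin.isValue, Fin.val_zero, Fin.val_one,
      show ((2:Fin 3):ℕ) = 2 from rfl, pow_zero, pow_one] at h <;> first
    | rfl
    | exact absurd h d01 | exact absurd h d02 | exact absurd h d12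
    | exact absurd h.symm d01 | exact absurd h.symm d02 | exact absurd h.symm d12

lemma cube_roots {a b : ℂ} (ha : a ≠ 0) (h : a ^ 3 + b ^ 3 = 0) :
    ∃ k : Fin 3, b = -zetaC ^ (k : ℕ) * a := by
  clear ha
  have key : (b + a) * (b + zetaC * a) * (b + zetaC ^ 2 * a) = 0 := by
    linear_combination h + (a*b^2 + a^2*b*zetaC) * zetaC_sum + a^3 * zetaC_cube
  rcases mul_eq_zero.mp key with h' | h'
  · rcases mul_eq_zero.mp h' with h'' | h''
    · exact ⟨0, show b = -zetaC ^ (0:ℕ) * a by linear_combination h''⟩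
    · exact ⟨1, show b = -zetaC ^ (1:ℕ) * a by linear_combination h''⟩
  · exact ⟨2, show b = -zetaC ^ (2:ℕ) * a by linear_combination h'⟩

/-- Homogeneous coordinates of the nine points. -/
noncomputable def vpt (j k : Fin 3) : Fin 3 → ℂ :=
  ![![(1:ℂ), -zetaC ^ (k:ℕ), 0], ![0, 1, -zetaC ^ (k:ℕ)], ![-zetaC ^ (k:ℕ), 0, 1]] j

lemma vpt_ne_zero (j k : Fin 3) : vpt j k ≠ 0 := by
  intro h
  fin_cases j
  · exact one_ne_zero (congrFun h 0)
  · exact one_ne_zero (congrFun h 1)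
  · exact one_ne_zero (congrFun h 2)

/-- The nine points. -/
noncomputable def Ppt (j k : Fin 3) : ℙ ℂ (Fin 3 → ℂ) :=
  Projectivization.mk ℂ (vpt j k) (vpt_ne_zero j k)

lemma neg_zeta_pow_cube (k : Fin 3) : (-zetaC ^ (k:ℕ)) ^ 3 = -1 := by
  have h : (zetaC ^ (k:ℕ)) ^ 3 = 1 := by
    rw [← pow_mul, mul_comm, pow_mul, zetaC_cube, one_pow]
  linear_combination -h

lemma Ppt_mem (j k : Fin 3) : Ppt j k ∈ Scubics := by
  refine ⟨vpt j k, vpt_ne_zero j k, rfl, ?_, ?_⟩ <;> fin_cases j <;>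
    simp [vpt, neg_zeta_pow_cube k]

lemma S_eq : Scubics = Set.range (fun x : Fin 3 × Fin 3 => Ppt x.1 x.2) := by
  ext p
  constructor
  · rintro ⟨y, hy, rfl, hc, hp⟩
    have ext0 : ∀ z : Fin 3 → ℂ, z 0 = 0 → z 1 = 0 → z 2 = 0 → z = 0 := by
      intro z h0 h1 h2; funext i; fin_cases i <;> assumption
    rcases mul_eq_zero.mp hp with hp' | h2
    · rcases mul_eq_zero.mp hp' with h0 | h1
      · have h1ne : y 1 ≠ 0 := by
          intro h1
          have h2 : y 2 = 0 := by
            have : y 2 ^ 3 = 0 := by rw [h0, h1] at hc; linear_combination hc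
            exact pow_eq_zero_iff (by norm_num) |>.mp this
          exact hy (ext0 y h0 h1 h2)
        obtain ⟨k, hk⟩ := cube_roots (b := y 2) h1ne (by rw [h0] at hc; linear_combination hc)
        refine ⟨(1, k), ?_⟩
        refine ((Projectivization.mk_eq_mk_iff' ℂ y (vpt 1 k) hy (vpt_ne_zero 1 k)).mpr
          ⟨y 1, ?_⟩).symm
        funext i; fin_cases i <;> simp [vpt] <;>
          first | exact h0 | exact h0.symm | linear_combination -hk | linear_combination hk
      · have h2ne : y 2 ≠ 0 := by
          intro h2
          have h0' : y 0 = 0 := by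
            have : y 0 ^ 3 = 0 := by rw [h1, h2] at hc; linear_combination hc
            exact pow_eq_zero_iff (by norm_num) |>.mp this
          exact hy (ext0 y h0' h1 h2)
        obtain ⟨k, hk⟩ := cube_roots (b := y 0) h2ne (by rw [h1] at hc; linear_combination hc)
        refine ⟨(2, k), ?_⟩
        refine ((Projectivization.mk_eq_mk_iff' ℂ y (vpt 2 k) hy (vpt_ne_zero 2 k)).mpr
          ⟨y 2, ?_⟩).symm
        funext i; fin_cases i <;> simp [vpt] <;>
          first | exact h1 | exact h1.symm | linear_combination -hk | linear_combination hk
    · have h0ne : y 0 ≠ 0 := by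
        intro h0
        have h1 : y 1 = 0 := by
          have : y 1 ^ 3 = 0 := by rw [h0, h2] at hc; linear_combination hc
          exact pow_eq_zero_iff (by norm_num) |>.mp this
        exact hy (ext0 y h0 h1 h2)
      obtain ⟨k, hk⟩ := cube_roots (b := y 1) h0ne (by rw [h2] at hc; linear_combination hc)
      refine ⟨(0, k), ?_⟩
      refine ((Projectivization.mk_eq_mk_iff' ℂ y (vpt 0 k) hy (vpt_ne_zero 0 k)).mpr
        ⟨y 0, ?_⟩).symm
      funext i; fin_cases i <;> simp [vpt] <;>
        first | exact h2 | exact h2.symm | linear_combination -hk | linear_combination hk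
  · rintro ⟨⟨j, k⟩, rfl⟩
    exact Ppt_mem j k

lemma Ppt_inj : Function.Injective (fun x : Fin 3 × Fin 3 => Ppt x.1 x.2) := by
  have hz : ∀ m : Fin 3, zetaC ^ (m:ℕ) ≠ 0 := fun m => pow_ne_zero _ zetaC_ne_zero
  clear hz
  rintro ⟨j, k⟩ ⟨j', k'⟩ h
  simp only [Ppt] at h
  rw [Projectivization.mk_eq_mk_iff'] at h
  obtain ⟨a, ha⟩ := h
  have h0 := congrFun ha 0
  have h1 := congrFun ha 1
  have h2 := congrFun ha 2
  simp only [Prod.mk.injEq]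
  fin_cases j <;> fin_cases j' <;> simp [vpt] at h0 h1 h2 ⊢ <;>
    first
    | exact zetaC_ne_zero h0.1 | exact zetaC_ne_zero h1.1 | exact zetaC_ne_zero h2.1
    | (subst h0; rw [one_mul] at h1; exact zetaC_pow_inj _ _ h1.symm)
    | (subst h1; rw [one_mul] at h2; exact zetaC_pow_inj _ _ h2.symm)
    | (subst h2; rw [one_mul] at h0; exact zetaC_pow_inj _ _ h0.symm)

lemma g1_apply (y : Fin 3 → ℂ) : g1Lin y = ![y 0, zetaC * y 1, zetaC ^ 2 * y 2] := by
  funext i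
  fin_cases i <;> simp [g1Lin, LinearEquiv.piCongrRight, LinearEquiv.smulOfNeZero,
    LinearEquiv.smulOfUnit, smul_eq_mul]

lemma g2_apply (y : Fin 3 → ℂ) : g2Lin y = ![y 1, y 2, y 0] := by
  funext i
  fin_cases i <;> simp [g2Lin, LinearEquiv.funCongrLeft, finRotate_succ_apply] <;> rfl

lemma projPerm_apply (e : (Fin 3 → ℂ) ≃ₗ[ℂ] (Fin 3 → ℂ)) (v : Fin 3 → ℂ) (hv : v ≠ 0) :
    projPerm e (Projectivization.mk ℂ v hv) =
      Projectivization.mk ℂ (e v) (fun h => hv (by simpa using congrArg e.symm h)) := by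
  show Projectivization.map e.toLinearMap e.injective (Projectivization.mk ℂ v hv) = _
  rw [Projectivization.map_mk]
  rfl

lemma A1 (j k : Fin 3) : projPerm g1Lin (Ppt j k) = Ppt j (k + 1) := by
  rw [Ppt, Ppt, projPerm_apply]
  rw [Projectivization.mk_eq_mk_iff']
  refine ⟨![1, zetaC, zetaC ^ 2] j, ?_⟩
  rw [g1_apply]
  have hc := zetaC_cube
  funext i
  fin_cases j <;> fin_cases k <;> fin_cases i <;>
    simp [vpt, show ((0:Fin 3)+1 : Fin 3) = 1 from rfl, show ((1:Fin 3)+1 : Fin 3) = 2 from rfl,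
      show ((2:Fin 3)+1 : Fin 3) = 0 from rfl] <;>
    ring_nf <;>
    first
    | rfl
    | linear_combination 1 * hc
    | linear_combination -1 * hc
    | linear_combination zetaC * hc
    | linear_combination -zetaC * hc
    | linear_combination zetaC^2 * hc
    | linear_combination -zetaC^2 * hc
    | linear_combination (1-zetaC) * hc
    | linear_combination (1+zetaC) * hc
    | linear_combination (-1+zetaC) * hc
    | linear_combination (-1-zetaC) * hc
    | linear_combination (1-zetaC^2) * hc
    | linear_combination (1+zetaC^2) * hc
    | linear_combination (-1+zetaC^2) * hc
    | linear_combination (-1-zetaC^2) * hc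
    | linear_combination (zetaC-zetaC^2) * hc
    | linear_combination (zetaC+zetaC^2) * hc
    | linear_combination (-zetaC+zetaC^2) * hc
    | linear_combination (-zetaC-zetaC^2) * hc

lemma A2 (j k : Fin 3) : projPerm g2Lin (Ppt j k) = Ppt (j + 2) k := by
  rw [Ppt, Ppt, projPerm_apply]
  rw [Projectivization.mk_eq_mk_iff']
  refine ⟨1, ?_⟩
  rw [g2_apply]
  funext i
  fin_cases j <;> fin_cases i <;>
    simp [vpt, show ((0:Fin 3)+2 : Fin 3) = 2 from rfl, show ((1:Fin 3)+2 : Fin 3) = 0 from rfl,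
      show ((2:Fin 3)+2 : Fin 3) = 1 from rfl]

lemma ncard_S : Scubics.ncard = 9 := by
  rw [S_eq, ← Set.image_univ, Set.ncard_image_of_injective _ Ppt_inj, Set.ncard_univ]
  simp

lemma image_eq_of_perm (g : Equiv.Perm (ℙ ℂ (Fin 3 → ℂ))) (σ : Equiv.Perm (Fin 3 × Fin 3))
    (h : ∀ x : Fin 3 × Fin 3, g (Ppt x.1 x.2) = Ppt (σ x).1 (σ x).2) :
    g '' Scubics = Scubics := by
  rw [S_eq]
  ext q
  constructor
  · rintro ⟨-, ⟨x, rfl⟩, rfl⟩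
    exact ⟨σ x, (h x).symm⟩
  · rintro ⟨x, rfl⟩
    exact ⟨Ppt (σ.symm x).1 (σ.symm x).2, ⟨σ.symm x, rfl⟩, by rw [h (σ.symm x)]; simp⟩

lemma invariance : ∀ g ∈ Subgroup.closure {projPerm g1Lin, projPerm g2Lin},
    g '' Scubics = Scubics := by
  intro g hg
  induction hg using Subgroup.closure_induction with
  | mem x hx =>
    rcases hx with rfl | rfl
    · exact image_eq_of_perm _ ((Equiv.refl (Fin 3)).prodCongr (Equiv.addRight 1))
        (fun x => A1 x.1 x.2)
    · exact image_eq_of_perm _ ((Equiv.addRight 2).prodCongr (Equiv.refl (Fin 3)))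
        (fun x => A2 x.1 x.2)
  | one => simp
  | mul x y hx hy ihx ihy =>
    rw [show ((x * y : Equiv.Perm _) : _ → _) = x ∘ y from rfl, Set.image_comp, ihy, ihx]
  | inv x hx ih =>
    conv_lhs => rw [← ih]
    rw [← Set.image_comp]
    simp [Function.comp_def]

/-- The group element carrying `Ppt 0 0` to `Ppt j k`. -/
noncomputable def gOf (j k : Fin 3) : Equiv.Perm (ℙ ℂ (Fin 3 → ℂ)) :=
  (projPerm g1Lin) ^ (k : ℕ) * (projPerm g2Lin) ^ (2 * (j : ℕ))

lemma gOf_mem (j k : Fin 3) :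
    gOf j k ∈ Subgroup.closure {projPerm g1Lin, projPerm g2Lin} := by
  apply mul_mem <;> apply pow_mem <;> apply Subgroup.subset_closure
  · exact Set.mem_insert _ _
  · exact Set.mem_insert_iff.mpr (Or.inr rfl)

lemma reach (j k : Fin 3) : gOf j k (Ppt 0 0) = Ppt j k := by
  fin_cases j <;> fin_cases k <;>
    simp [gOf, pow_succ, Equiv.Perm.mul_apply, A1, A2]

/-- **The nine common solutions of the two cubics, and transitivity of `ℤ₃×ℤ₃`.**
`g₁Lin` and `g₂Lin` indeed act by `y ↦ (y₀, ζy₁, ζ²y₂)` and `y ↦ (y₁, y₂, y₀)`;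
the set `S` has exactly 9 elements; and the group of projective transformations
generated by `g₁` and `g₂` maps `S` to itself and acts transitively on `S`. -/
theorem nine_points_transitive :
    (∀ y : Fin 3 → ℂ, g1Lin y = ![y 0, zetaC * y 1, zetaC ^ 2 * y 2]) ∧
    (∀ y : Fin 3 → ℂ, g2Lin y = ![y 1, y 2, y 0]) ∧
    Scubics.ncard = 9 ∧
    (∀ g ∈ Subgroup.closure {projPerm g1Lin, projPerm g2Lin}, g '' Scubics = Scubics) ∧
    (∀ p ∈ Scubics, ∀ q ∈ Scubics,
      ∃ g ∈ Subgroup.closure {projPerm g1Lin, projPerm g2Lin}, g p = q) := by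
  refine ⟨g1_apply, g2_apply, ncard_S, invariance, ?_⟩
  intro p hp q hq
  rw [S_eq] at hp hq
  obtain ⟨⟨j, k⟩, rfl⟩ := hp
  obtain ⟨⟨j', k'⟩, rfl⟩ := hq
  refine ⟨gOf j' k' * (gOf j k)⁻¹, mul_mem (gOf_mem j' k') (inv_mem (gOf_mem j k)), ?_⟩
  rw [Equiv.Perm.mul_apply]
  have : (gOf j k)⁻¹ (Ppt j k) = Ppt 0 0 := by
    rw [← reach j k]; exact Equiv.symm_apply_apply _ _
  rw [this, reach]
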